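/- Let S ⊂ V be a set with 𝓑 ⊄ S in the wired binary tree of depth n+1 with sink z and 𝓑 the set of 2^n neighbors of z. For simple random walk started either at the root or at a uniform vertex, the probability p_S that the walk hits 𝓑 \ S before hitting z satisfies p_S ≤ 2(1 − #(S ∩ 𝓑)/2^n). -/

import Mathlib

open MeasureTheory ProbabilityTheory
open scoped ENNReal Classical

noncomputable section

/-- Vertices of the wired binary tree of depth `n+1`: the tree vertices are binary
strings of length `≤ n`, and `none` is the sink `z` obtained by collapsing all
`2^{n+1}` leaves (the strings of length `n+1`) to a single vertex. -/
def WiredTree (n : ℕ) := Option {l : List Bool // l.length ≤ n}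

instance (n : ℕ) : MeasurableSpace (WiredTree n) := ⊤

/-- Multiplicity of edges from `v` to `w` in the wired binary tree: a vertex of depth
`< n` is joined to its two children, a vertex of depth `n` is joined to the sink by two
edges (its two collapsed leaf-children), and every non-root vertex is joined to its
parent. The sink contributes no outgoing edges here (it is treated as absorbing). -/
def edgeCount (n : ℕ) : WiredTree n → WiredTree n → ℕ
  | none, _ => 0
  | some l, w =>
    (if h : l.1.length < n then
      ((if w = some ⟨l.1 ++ [true], by simpa using h⟩ then 1 else 0) +
       (if w = some ⟨l.1 ++ [false], by simpa using h⟩ then 1 else 0))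
    else (if w = none then 2 else 0))
    + (if l.1 = [] then 0
       else (if w = some ⟨l.1.dropLast, by
            have := l.2; simp only [List.length_dropLast]; omega⟩ then 1 else 0))

/-- Degree of a vertex of the wired binary tree (the sink is absorbing). -/
def deg (n : ℕ) : WiredTree n → ℕ
  | none => 1
  | some l => if l.1 = [] then 2 else 3

/-- Transition probabilities of simple random walk on the wired binary tree,
absorbed at the sink. -/
def treeTrans (n : ℕ) (v w : WiredTree n) : ℝ≥0∞ :=
  match v with
  | none => if w = none then 1 else 0
  | some l => (edgeCount n (some l) w : ℝ≥0∞) / (deg n (some l) : ℝ≥0∞)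

/-- `𝓑`, the set of `2^n` tree neighbors of the sink: the vertices of depth `n`. -/
def treeBdry (n : ℕ) : Set (WiredTree n) :=
  {v | ∃ l, v = some l ∧ l.1.length = n}

/-- `X` is a Markov chain with initial distribution `init` and the transition
probabilities of simple random walk on the wired binary tree. -/
def IsTreeWalk {Ω : Type*} [MeasurableSpace Ω] (n : ℕ) (P : Measure Ω)
    (X : ℕ → Ω → WiredTree n) (init : WiredTree n → ℝ≥0∞) : Prop :=
  (∀ t, Measurable (X t)) ∧
    ∀ (t : ℕ) (s : ℕ → WiredTree n),
      P {ω | ∀ i ≤ t, X i ω = s i} =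
        init (s 0) * ∏ i ∈ Finset.range t, treeTrans n (s i) (s (i + 1))

/-- The number of visits to `𝓑` strictly before the walk first hits the sink. -/
def visitsBdry {Ω : Type*} (n : ℕ) (X : ℕ → Ω → WiredTree n) (ω : Ω) : ℝ≥0∞ :=
  ∑' t : ℕ, (if X t ω ∈ treeBdry n ∧ ∀ s ≤ t, X s ω ≠ none then 1 else 0)


attribute [reducible] WiredTree

attribute [instance] instMeasurableSpaceWiredTree

namespace TreeAux

def xm (c l : List Bool) : List Bool := List.zipWith xor l c

lemma length_xm {c l : List Bool} (h : l.length ≤ c.length) : (xm c l).length = l.length := by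
  simp [xm, List.length_zipWith]; omega

lemma xm_xm {c l : List Bool} (h : l.length ≤ c.length) : xm c (xm c l) = l := by
  induction l generalizing c with
  | nil => simp [xm]
  | cons a l ih =>
    cases c with
    | nil => simp at h
    | cons d c =>
      simp only [xm, List.zipWith] at *
      simp only [List.length_cons, Nat.add_le_add_iff_right] at h
      rw [ih h]
      cases a <;> cases d <;> simp

lemma xm_mask {x y : List Bool} (h : x.length = y.length) : xm (xm y x) x = y := by
  induction x generalizing y with
  | nil =>
    cases y with
    | nil => simp [xm]
    | cons => simp at h
  | cons a x ih =>
    cases y with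
    | nil => simp at h
    | cons b y =>
      simp only [List.length_cons, Nat.add_right_cancel_iff] at h
      simp only [xm, List.zipWith] at *
      rw [ih h]
      cases a <;> cases b <;> simp

lemma xm_nil_iff {c l : List Bool} (h : l.length ≤ c.length) : xm c l = ([]) ↔ l = ([]) := by
  constructor
  · intro hl
    have := length_xm h
    rw [hl] at this
    simpa using this.symm
  · rintro rfl; simp [xm]

lemma xm_append {c l : List Bool} (h : l.length < c.length) (b : Bool) :
    xm c (l ++ [b]) = xm c l ++ [xor b (c.getD l.length false)] := by
  induction l generalizing c with
  | nil =>
    cases c with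
    | nil => simp at h
    | cons d c => simp [xm]
  | cons a l ih =>
    cases c with
    | nil => simp at h
    | cons d c =>
      simp only [List.length_cons, Nat.add_lt_add_iff_right] at h
      simp only [xm, List.cons_append, List.zipWith, List.append_eq, List.getD_cons_succ] at *
      rw [ih h]
      rfl

lemma xm_dropLast {c l : List Bool} (h : l.length ≤ c.length) :
    (xm c l).dropLast = xm c l.dropLast := by
  rcases eq_or_ne l ([]) with rfl | hl
  · simp [xm]
  · have hd : l.dropLast ++ [l.getLast hl] = l := List.dropLast_append_getLast hl
    have hlen : l.dropLast.length < c.length := by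
      have h1 : l.dropLast.length = l.length - 1 := List.length_dropLast
      have h2 : l.length ≠ 0 := by simpa using hl
      omega
    conv_lhs => rw [← hd]
    rw [xm_append hlen]
    simp

lemma xm_eq_iff {c A B : List Bool} (hA : A.length ≤ c.length) (hB : B.length ≤ c.length) :
    xm c A = B ↔ A = xm c B := by
  constructor
  · rintro rfl; exact (xm_xm hA).symm
  · rintro rfl; exact xm_xm hB

end TreeAux

namespace TreeAux
variable {n : ℕ}

lemma some_ext {A B : List Bool} {hA : A.length ≤ n} {hB : B.length ≤ n} :
    (some ⟨A, hA⟩ : WiredTree n) = some ⟨B, hB⟩ ↔ A = B :=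
  ⟨fun h => congrArg Subtype.val (Option.some.inj h), fun h => congrArg some (Subtype.ext h)⟩

lemma none_ne_some' {x : {l : List Bool // l.length ≤ n}} :
    ((none : WiredTree n) = some x) ↔ False :=
  iff_false_intro (fun h => by cases h)

lemma some_ne_none' {x : {l : List Bool // l.length ≤ n}} :
    ((some x : WiredTree n) = none) ↔ False :=
  iff_false_intro (fun h => by cases h)

/-- The xor-mask automorphism of the wired tree, for a mask of length `n`. -/
def phi (n : ℕ) (c : List Bool) (hc : c.length = n) : WiredTree n → WiredTree n
  | none => none
  | some l => some ⟨xm c l.1, by rw [length_xm (by rw [hc]; exact l.2)]; exact l.2⟩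

variable {c : List Bool} (hc : c.length = n)

lemma phi_none : phi n c hc none = none := rfl

lemma phi_phi (v : WiredTree n) : phi n c hc (phi n c hc v) = v := by
  cases v with
  | none => rfl
  | some l =>
    show some _ = some l
    rw [some_ext.2 (xm_xm (show l.1.length ≤ c.length by rw [hc]; exact l.2))]

lemma phi_inj : Function.Injective (phi n c hc) := by
  intro v w h
  have := congrArg (phi n c hc) h
  rwa [phi_phi, phi_phi] at this

lemma phi_eq_none_iff (v : WiredTree n) : phi n c hc v = none ↔ v = none := by
  cases v with
  | none => simp [phi_none]
  | some l => exact ⟨fun h => absurd h (some_ne_none').mp, fun h => absurd h (some_ne_none').mp⟩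

lemma deg_phi (v : WiredTree n) : deg n (phi n c hc v) = deg n v := by
  cases v with
  | none => rfl
  | some l =>
    show (if xm c l.1 = ([]) then 2 else 3) = if l.1 = ([]) then 2 else 3
    by_cases h0 : l.1 = ([])
    · rw [if_pos ((xm_nil_iff (by rw [hc]; exact l.2)).2 h0), if_pos h0]
    · rw [if_neg (fun hh => h0 ((xm_nil_iff (by rw [hc]; exact l.2)).1 hh)), if_neg h0]

lemma edgeCount_phi (v w : WiredTree n) :
    edgeCount n (phi n c hc v) (phi n c hc w) = edgeCount n v w := by
  cases v with
  | none => rfl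
  | some l =>
    have hl : l.1.length ≤ c.length := by rw [hc]; exact l.2
    have hlen : (xm c l.1).length = l.1.length := length_xm hl
    show edgeCount n (some ⟨xm c l.1, _⟩) (phi n c hc w) = edgeCount n (some l) w
    cases w with
    | none =>
      rw [phi_none]
      simp only [edgeCount]
      congr 1
      · by_cases h : l.1.length < n
        · rw [dif_pos (by rw [hlen]; exact h), dif_pos h]
          rw [if_neg (fun hh => by cases hh), if_neg (fun hh => by cases hh),
            if_neg (fun hh => by cases hh), if_neg (fun hh => by cases hh)]
        · rw [dif_neg (by rw [hlen]; omega), dif_neg h]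
      · by_cases h0 : l.1 = ([])
        · rw [if_pos ((xm_nil_iff hl).2 h0), if_pos h0]
        · rw [if_neg (fun hh => h0 ((xm_nil_iff hl).1 hh)), if_neg h0]
          rw [if_neg (fun hh => by cases hh), if_neg (fun hh => by cases hh)]
    | some m =>
      have hm : m.1.length ≤ c.length := by rw [hc]; exact m.2
      show edgeCount n (some ⟨xm c l.1, _⟩) (some ⟨xm c m.1, _⟩) = edgeCount n (some l) (some m)
      simp only [edgeCount]
      congr 1
      · by_cases h : l.1.length < n
        · rw [dif_pos (by rw [hlen]; exact h), dif_pos h]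
          have hcl : l.1.length < c.length := by omega
          have h1 : ∀ b : Bool, (xm c m.1 = xm c l.1 ++ [b]) ↔
              (m.1 = l.1 ++ [xor b (c.getD l.1.length false)]) := by
            intro b
            rw [xm_eq_iff hm (by rw [List.length_append, hlen]; simpa using hcl),
              xm_append (by rw [hlen]; exact hcl), xm_xm hl, hlen]
          have pt : ((some ⟨xm c m.1, by rw [length_xm hm]; exact m.2⟩ : WiredTree n)
              = some ⟨xm c l.1 ++ [true], by rw [List.length_append, hlen]; simpa using h⟩)
              ↔ xm c m.1 = xm c l.1 ++ [true] := some_ext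
          have pf : ((some ⟨xm c m.1, by rw [length_xm hm]; exact m.2⟩ : WiredTree n)
              = some ⟨xm c l.1 ++ [false], by rw [List.length_append, hlen]; simpa using h⟩)
              ↔ xm c m.1 = xm c l.1 ++ [false] := some_ext
          have qt : ((some m : WiredTree n)
              = some ⟨l.1 ++ [true], by simpa using h⟩) ↔ m.1 = l.1 ++ [true] := some_ext
          have qf : ((some m : WiredTree n)
              = some ⟨l.1 ++ [false], by simpa using h⟩) ↔ m.1 = l.1 ++ [false] := some_ext
          simp only [pt, pf, qt, qf, h1]
          cases hE : c.getD l.1.length false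
          · simp
          · simp only [Bool.xor_true, Bool.not_true, Bool.not_false]
            exact add_comm _ _
        · rw [dif_neg (by rw [hlen]; omega), dif_neg h]
          rw [if_neg (fun hh => by cases hh), if_neg (fun hh => by cases hh)]
      · by_cases h0 : l.1 = ([])
        · rw [if_pos ((xm_nil_iff hl).2 h0), if_pos h0]
        · rw [if_neg (fun hh => h0 ((xm_nil_iff hl).1 hh)), if_neg h0]
          have hdl : l.1.dropLast.length ≤ c.length := by
            have : l.1.dropLast.length = l.1.length - 1 := List.length_dropLast; omega
          have h2 : (xm c m.1 = (xm c l.1).dropLast) ↔ (m.1 = l.1.dropLast) := by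
            rw [xm_dropLast hl, xm_eq_iff hm (by rw [length_xm hdl]; exact hdl), xm_xm hdl]
          have p1 : ((some ⟨xm c m.1, by rw [length_xm hm]; exact m.2⟩ : WiredTree n)
              = some ⟨(xm c l.1).dropLast, by
                have := l.2; rw [List.length_dropLast, hlen]; omega⟩)
              ↔ xm c m.1 = (xm c l.1).dropLast := some_ext
          have q1 : ((some m : WiredTree n)
              = some ⟨l.1.dropLast, by
                have := l.2; rw [List.length_dropLast]; omega⟩) ↔ m.1 = l.1.dropLast := some_ext
          simp only [p1, q1, h2]

lemma treeTrans_phi (v w : WiredTree n) :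
    treeTrans n (phi n c hc v) (phi n c hc w) = treeTrans n v w := by
  cases v with
  | none =>
    show treeTrans n none (phi n c hc w) = treeTrans n none w
    simp only [treeTrans, phi_eq_none_iff]
    split_ifs <;> rfl
  | some l =>
    show treeTrans n (some _) _ = _
    simp only [treeTrans]
    rw [show edgeCount n (some ⟨xm c l.1, _⟩) (phi n c hc w)
        = edgeCount n (phi n c hc (some l)) (phi n c hc w) from rfl]
    rw [edgeCount_phi hc, show deg n (some ⟨xm c l.1, _⟩) = deg n (phi n c hc (some l)) from rfl,
      deg_phi hc]

end TreeAux

namespace TreeAux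

instance fintypeSub (n : ℕ) : Fintype {l : List Bool // l.length ≤ n} := by
  haveI h : Finite {l : List Bool // l.length ≤ n} := by
    haveI := (List.finite_length_le Bool n).to_subtype
    exact Finite.of_equiv (↥{l : List Bool | l.length ≤ n}) (Equiv.subtypeEquivRight (fun l => Iff.rfl))
  exact Fintype.ofFinite _

instance fintypeWT (n : ℕ) : Fintype (WiredTree n) := by
  unfold WiredTree; infer_instance

lemma measurableSet_WT {n : ℕ} (s : Set (WiredTree n)) : MeasurableSet s := trivial

section Walk

variable {n : ℕ} {Ω : Type*} [MeasurableSpace Ω] {P : Measure Ω}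
  {X : ℕ → Ω → WiredTree n} {init : WiredTree n → ℝ≥0∞}

/-- Path weight. -/
def pw (n : ℕ) (init : WiredTree n → ℝ≥0∞) (t : ℕ) (s : ℕ → WiredTree n) : ℝ≥0∞ :=
  init (s 0) * ∏ i ∈ Finset.range t, treeTrans n (s i) (s (i + 1))

/-- Extend a finite window to an infinite sequence (by `none`). -/
def extSeq {n : ℕ} (t : ℕ) (v : Fin (t + 1) → WiredTree n) : ℕ → WiredTree n :=
  fun i => if h : i < t + 1 then v ⟨i, h⟩ else none

lemma meas_window (hX : IsTreeWalk n P X init) (t : ℕ)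
    (Q : (Fin (t + 1) → WiredTree n) → Prop) [DecidablePred Q] :
    P {ω | Q (fun i => X i.1 ω)}
      = ∑ v ∈ Finset.univ.filter (fun v => Q v), pw n init t (extSeq t v) := by
  have hset : {ω | Q (fun i => X i.1 ω)}
      = ⋃ v ∈ Finset.univ.filter (fun v => Q v), {ω | ∀ i ≤ t, X i ω = extSeq t v i} := by
    ext ω
    simp only [Set.mem_setOf_eq, Set.mem_iUnion, Finset.mem_filter, Finset.mem_univ, true_and]
    constructor
    · intro h
      refine ⟨fun i => X i.1 ω, h, fun i hi => ?_⟩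
      rw [extSeq, dif_pos (by omega : i < t + 1)]
    · rintro ⟨v, hv, hvw⟩
      have hfun : (fun i : Fin (t + 1) => X i.1 ω) = v := by
        funext i
        have h2 := hvw i.1 (by omega)
        rwa [extSeq, dif_pos i.isLt, Fin.eta] at h2
      rw [hfun]; exact hv
  rw [hset, measure_biUnion_finset]
  · exact Finset.sum_congr rfl fun v _ => hX.2 t (extSeq t v)
  · intro v hv w hw hvw
    refine Set.disjoint_left.2 fun ω hωv hωw => hvw ?_
    funext i
    have h1 := hωv i.1 (by omega : i.1 ≤ t)
    have h2 := hωw i.1 (by omega : i.1 ≤ t)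
    rw [extSeq, dif_pos i.isLt, Fin.eta] at h1 h2
    rw [← h1, ← h2]
  · intro v _
    have : {ω | ∀ i ≤ t, X i ω = extSeq t v i}
        = ⋂ i, ⋂ (_ : i ≤ t), X i ⁻¹' {extSeq t v i} := by
      ext ω; simp [Set.mem_iInter]
    rw [this]
    exact MeasurableSet.iInter fun i => MeasurableSet.iInter fun _ =>
      hX.1 i (measurableSet_WT _)

/-- The event of being at `x` at time `t` without having hit the sink. -/
def bset (X : ℕ → Ω → WiredTree n) (t : ℕ) (x : WiredTree n) : Set Ω :=
  {ω | X t ω = x ∧ ∀ s ≤ t, X s ω ≠ none}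

lemma bset_meas_eq (hX : IsTreeWalk n P X init) (t : ℕ) (x : WiredTree n) :
    P (bset X t x) = ∑ v ∈ Finset.univ.filter
      (fun v : Fin (t + 1) → WiredTree n => v (Fin.last t) = x ∧ ∀ i, v i ≠ none),
      pw n init t (extSeq t v) := by
  rw [← meas_window hX t (fun v => v (Fin.last t) = x ∧ ∀ i, v i ≠ none)]
  congr 1
  ext ω
  simp only [bset, Set.mem_setOf_eq]
  constructor
  · rintro ⟨h1, h2⟩
    exact ⟨h1, fun i => h2 i.1 (by omega)⟩
  · rintro ⟨h1, h2⟩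
    exact ⟨h1, fun s hs => h2 ⟨s, by omega⟩⟩

lemma bset_measurableSet (hX : IsTreeWalk n P X init) (t : ℕ) (x : WiredTree n) :
    MeasurableSet (bset X t x) := by
  have : bset X t x = (X t ⁻¹' {x}) ∩ ⋂ s, ⋂ (_ : s ≤ t), X s ⁻¹' {none}ᶜ := by
    ext ω; simp [bset]
  rw [this]
  exact (hX.1 t (measurableSet_WT _)).inter
    (MeasurableSet.iInter fun s => MeasurableSet.iInter fun _ => hX.1 s (measurableSet_WT _))

lemma init_phi (hinit : (∀ v, init v = if v = some ⟨[], by simp⟩ then 1 else 0) ∨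
      (∀ v, init v = if v = none then 0 else ((2 ^ (n + 1) - 1 : ℝ≥0∞))⁻¹))
    {c : List Bool} (hc : c.length = n) (v : WiredTree n) :
    init (phi n c hc v) = init v := by
  have hroot : phi n c hc (some ⟨([]), by simp⟩) = some ⟨([]), by simp⟩ := rfl
  rcases hinit with h | h
  · rw [h, h]
    by_cases hv : v = some ⟨([]), by simp⟩
    · rw [if_pos hv, if_pos (by rw [hv, hroot])]
    · rw [if_neg hv, if_neg (fun hh => hv (by
        have := congrArg (phi n c hc) hh
        rwa [phi_phi, hroot] at this))]
  · rw [h, h]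
    by_cases hv : v = none
    · rw [if_pos hv, if_pos (by rw [hv, phi_none])]
    · rw [if_neg hv, if_neg (fun hh => hv ((phi_eq_none_iff hc v).1 hh))]

lemma pw_phi (hinit : (∀ v, init v = if v = some ⟨[], by simp⟩ then 1 else 0) ∨
      (∀ v, init v = if v = none then 0 else ((2 ^ (n + 1) - 1 : ℝ≥0∞))⁻¹))
    {c : List Bool} (hc : c.length = n) (t : ℕ) (s : ℕ → WiredTree n) :
    pw n init t (fun i => phi n c hc (s i)) = pw n init t s := by
  unfold pw
  rw [init_phi hinit hc]
  congr 1
  exact Finset.prod_congr rfl fun i _ => treeTrans_phi hc _ _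

/-- Symmetry: the probability of being at `x ∈ 𝓑` at time `t` avoiding the sink
is the same for all `x ∈ 𝓑`. -/
lemma bset_symm (hX : IsTreeWalk n P X init)
    (hinit : (∀ v, init v = if v = some ⟨[], by simp⟩ then 1 else 0) ∨
      (∀ v, init v = if v = none then 0 else ((2 ^ (n + 1) - 1 : ℝ≥0∞))⁻¹))
    {x y : WiredTree n} (hx : x ∈ treeBdry n) (hy : y ∈ treeBdry n) (t : ℕ) :
    P (bset X t x) = P (bset X t y) := by
  obtain ⟨a, rfl, ha⟩ := hx
  obtain ⟨b, rfl, hb⟩ := hy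
  set c : List Bool := xm b.1 a.1 with hcdef
  have hc : c.length = n := by
    rw [hcdef, length_xm (by rw [hb, ha])]; exact ha
  have hphix : phi n c hc (some a) = some b := by
    show some _ = some b
    exact congrArg some (Subtype.ext (by
      show xm c a.1 = b.1
      rw [hcdef]
      exact xm_mask (by rw [ha, hb])))
  have hphiy : phi n c hc (some b) = some a := by
    have h5 := congrArg (phi n c hc) hphix
    rw [phi_phi] at h5
    exact h5.symm
  rw [bset_meas_eq hX, bset_meas_eq hX]
  refine Finset.sum_nbij' (i := fun v => phi n c hc ∘ v) (j := fun v => phi n c hc ∘ v)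
    ?_ ?_ ?_ ?_ ?_
  · intro v hv
    simp only [Finset.mem_filter, Finset.mem_univ, true_and] at hv ⊢
    refine ⟨by rw [Function.comp_apply, hv.1, hphix], fun i => ?_⟩
    rw [Function.comp_apply, Ne, phi_eq_none_iff]
    exact hv.2 i
  · intro v hv
    simp only [Finset.mem_filter, Finset.mem_univ, true_and] at hv ⊢
    refine ⟨by rw [Function.comp_apply, hv.1, hphiy], fun i => ?_⟩
    rw [Function.comp_apply, Ne, phi_eq_none_iff]
    exact hv.2 i
  · intro v _; funext i; exact phi_phi hc (v i)
  · intro v _; funext i; exact phi_phi hc (v i)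
  · intro v _
    have hext : extSeq t (phi n c hc ∘ v) = fun i => phi n c hc (extSeq t v i) := by
      funext i
      by_cases h : i < t + 1
      · rw [extSeq, extSeq, dif_pos h, dif_pos h]; rfl
      · rw [extSeq, extSeq, dif_neg h, dif_neg h, phi_none]
    rw [hext, pw_phi hinit hc]

end Walk
end TreeAux

namespace TreeAux
section Walk2

variable {n : ℕ} {Ω : Type*} [MeasurableSpace Ω] {P : Measure Ω}
  {X : ℕ → Ω → WiredTree n} {init : WiredTree n → ℝ≥0∞}

/-- Being in `𝓑` at time `t` without having hit the sink. -/
def Btset (X : ℕ → Ω → WiredTree n) (t : ℕ) : Set Ω :=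
  {ω | X t ω ∈ treeBdry n ∧ ∀ s ≤ t, X s ω ≠ none}

/-- Being in `𝓑` at time `t` without having hit the sink, and hitting the sink at `t+1`. -/
def Atset (X : ℕ → Ω → WiredTree n) (t : ℕ) : Set Ω :=
  {ω | (X t ω ∈ treeBdry n ∧ ∀ s ≤ t, X s ω ≠ none) ∧ X (t + 1) ω = none}

lemma Btset_eq_biUnion (t : ℕ) :
    Btset X t = ⋃ x ∈ Finset.univ.filter (· ∈ treeBdry n), bset X t x := by
  ext ω
  simp only [Btset, Set.mem_setOf_eq, Set.mem_iUnion, Finset.mem_filter, Finset.mem_univ,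
    true_and, bset]
  constructor
  · rintro ⟨h1, h2⟩; exact ⟨X t ω, h1, rfl, h2⟩
  · rintro ⟨x, hx, rfl, h2⟩; exact ⟨hx, h2⟩

lemma Btset_meas_eq (hX : IsTreeWalk n P X init) (t : ℕ) :
    P (Btset X t) = ∑ x ∈ Finset.univ.filter (· ∈ treeBdry n), P (bset X t x) := by
  rw [Btset_eq_biUnion]
  refine measure_biUnion_finset ?_ (fun x _ => bset_measurableSet hX t x)
  intro x _ y _ hxy
  refine Set.disjoint_left.2 fun ω hx hy => hxy ?_
  rw [← hx.1, ← hy.1]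

lemma Btset_window (hX : IsTreeWalk n P X init) (t : ℕ) :
    P (Btset X t) = ∑ v ∈ Finset.univ.filter
      (fun v : Fin (t + 1) → WiredTree n => v (Fin.last t) ∈ treeBdry n ∧ ∀ i, v i ≠ none),
      pw n init t (extSeq t v) := by
  rw [← meas_window hX t (fun v => v (Fin.last t) ∈ treeBdry n ∧ ∀ i, v i ≠ none)]
  congr 1
  ext ω
  simp only [Btset, Set.mem_setOf_eq]
  constructor
  · rintro ⟨h1, h2⟩
    exact ⟨h1, fun i => h2 i.1 (by omega)⟩
  · rintro ⟨h1, h2⟩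
    exact ⟨h1, fun s hs => h2 ⟨s, by omega⟩⟩

lemma Atset_window (hX : IsTreeWalk n P X init) (t : ℕ) :
    P (Atset X t) = ∑ v ∈ Finset.univ.filter
      (fun v : Fin (t + 2) → WiredTree n =>
        (v (Fin.castSucc (Fin.last t)) ∈ treeBdry n ∧ ∀ i : Fin (t + 2), i.1 ≤ t → v i ≠ none)
          ∧ v (Fin.last (t + 1)) = none),
      pw n init (t + 1) (extSeq (t + 1) v) := by
  rw [← meas_window hX (t + 1) (fun v : Fin (t + 2) → WiredTree n =>
      (v (Fin.castSucc (Fin.last t)) ∈ treeBdry n ∧ ∀ i : Fin (t + 2), i.1 ≤ t → v i ≠ none)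
        ∧ v (Fin.last (t + 1)) = none)]
  congr 1
  ext ω
  simp only [Atset, Set.mem_setOf_eq]
  constructor
  · rintro ⟨⟨h1, h2⟩, h3⟩
    exact ⟨⟨h1, fun i hi => h2 i.1 hi⟩, h3⟩
  · rintro ⟨⟨h1, h2⟩, h3⟩
    exact ⟨⟨h1, fun s hs => h2 ⟨s, by omega⟩ hs⟩, h3⟩

lemma extSeq_snoc_none (t : ℕ) (u : Fin (t + 1) → WiredTree n) :
    extSeq (t + 1) (Fin.snoc u none) = extSeq t u := by
  funext i
  by_cases h : i < t + 1
  · rw [extSeq, extSeq, dif_pos (by omega : i < t + 2), dif_pos h]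
    have hcast : (⟨i, by omega⟩ : Fin (t + 2)) = Fin.castSucc ⟨i, h⟩ := rfl
    rw [hcast, Fin.snoc_castSucc]
  · rw [extSeq, extSeq, dif_neg h]
    by_cases h2 : i < t + 2
    · rw [dif_pos h2]
      have hlast : (⟨i, h2⟩ : Fin (t + 2)) = Fin.last (t + 1) := by
        apply Fin.ext; simp only [Fin.last]; omega
      rw [hlast, Fin.snoc_last]
    · rw [dif_neg h2]

lemma trans_to_sink {x : WiredTree n} (hx : x ∈ treeBdry n) :
    (2 / 3 : ℝ≥0∞) ≤ treeTrans n x none := by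
  obtain ⟨a, rfl, ha⟩ := hx
  show (2 / 3 : ℝ≥0∞) ≤ (edgeCount n (some a) none : ℝ≥0∞) / (deg n (some a) : ℝ≥0∞)
  have hec : edgeCount n (some a) none = 2 := by
    simp only [edgeCount]
    rw [dif_neg (by omega : ¬ a.1.length < n)]
    by_cases h0 : a.1 = ([])
    · rw [if_pos h0]; simp
    · rw [if_neg h0, if_neg (fun hh : (none : WiredTree n) = some _ => by cases hh)]; simp
  rw [hec]
  have hdeg : deg n (some a) = 2 ∨ deg n (some a) = 3 := by
    by_cases h0 : a.1 = ([])
    · left; simp only [deg]; rw [if_pos h0]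
    · right; simp only [deg]; rw [if_neg h0]
  have h2 : ((2 : ℕ) : ℝ≥0∞) = 2 := by norm_num
  rcases hdeg with h | h
  · rw [h, h2, ENNReal.div_self (by norm_num) (by norm_num)]
    exact ENNReal.div_le_of_le_mul (by norm_num)
  · rw [h]
    have h3 : ((3 : ℕ) : ℝ≥0∞) = 3 := by norm_num
    rw [h2, h3]

lemma At_ge (hX : IsTreeWalk n P X init) (t : ℕ) :
    (2 / 3 : ℝ≥0∞) * P (Btset X t) ≤ P (Atset X t) := by
  rw [Btset_window hX t, Atset_window hX t, Finset.mul_sum]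
  rw [show (∑ v ∈ Finset.univ.filter
      (fun v : Fin (t + 2) → WiredTree n =>
        (v (Fin.castSucc (Fin.last t)) ∈ treeBdry n ∧ ∀ i : Fin (t + 2), i.1 ≤ t → v i ≠ none)
          ∧ v (Fin.last (t + 1)) = none),
      pw n init (t + 1) (extSeq (t + 1) v))
    = ∑ u ∈ Finset.univ.filter
      (fun v : Fin (t + 1) → WiredTree n => v (Fin.last t) ∈ treeBdry n ∧ ∀ i, v i ≠ none),
      pw n init (t + 1) (extSeq (t + 1) (Fin.snoc u none)) from ?_]
  · refine Finset.sum_le_sum fun u hu => ?_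
    simp only [Finset.mem_filter, Finset.mem_univ, true_and] at hu
    rw [extSeq_snoc_none]
    have h1 : extSeq t u t = u (Fin.last t) := by
      rw [extSeq, dif_pos (by omega : t < t + 1)]; rfl
    have h2 : extSeq t u (t + 1) = none := by
      rw [extSeq, dif_neg (by omega : ¬ t + 1 < t + 1)]
    have hpw : pw n init (t + 1) (extSeq t u)
        = pw n init t (extSeq t u) * treeTrans n (u (Fin.last t)) none := by
      simp only [pw]
      rw [Finset.prod_range_succ, ← mul_assoc, h1, h2]
    rw [hpw, mul_comm (2 / 3 : ℝ≥0∞) _]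
    exact mul_le_mul_right (trans_to_sink hu.1) _
  · symm
    refine Finset.sum_nbij' (i := fun u => Fin.snoc u none) (j := fun v => v ∘ Fin.castSucc)
      ?_ ?_ ?_ ?_ ?_
    · intro u hu
      simp only [Finset.mem_filter, Finset.mem_univ, true_and] at hu ⊢
      refine ⟨⟨?_, fun i hi => ?_⟩, ?_⟩
      · rw [Fin.snoc_castSucc]; exact hu.1
      · have hcast : i = Fin.castSucc ⟨i.1, by omega⟩ := by apply Fin.ext; rfl
        rw [hcast, Fin.snoc_castSucc]
        exact hu.2 _
      · rw [Fin.snoc_last]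
    · intro v hv
      simp only [Finset.mem_filter, Finset.mem_univ, true_and] at hv ⊢
      exact ⟨hv.1.1, fun i => hv.1.2 (Fin.castSucc i)
        (by have := i.isLt; simp only [Fin.coe_castSucc]; omega)⟩
    · intro u _
      funext i
      exact Fin.snoc_castSucc (α := fun _ => WiredTree n) none u i
    · intro v hv
      simp only [Finset.mem_filter, Finset.mem_univ, true_and] at hv
      funext i
      show @Fin.snoc (t + 1) (fun _ => WiredTree n) (v ∘ Fin.castSucc) none i = v i
      refine Fin.lastCases ?_ (fun j => ?_) i
      · rw [Fin.snoc_last]; exact hv.2.symm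
      · exact Fin.snoc_castSucc (α := fun _ => WiredTree n) none (v ∘ Fin.castSucc) j
    · intro u _; rfl

lemma Atset_measurableSet (hX : IsTreeWalk n P X init) (t : ℕ) :
    MeasurableSet (Atset X t) := by
  have : Atset X t = ((X t ⁻¹' (treeBdry n)) ∩ ⋂ s, ⋂ (_ : s ≤ t), X s ⁻¹' {none}ᶜ)
      ∩ X (t + 1) ⁻¹' {none} := by
    ext ω; simp [Atset]; try tauto
  rw [this]
  exact (((hX.1 t (measurableSet_WT _)).inter
    (MeasurableSet.iInter fun s => MeasurableSet.iInter fun _ =>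
      hX.1 s (measurableSet_WT _)))).inter (hX.1 (t + 1) (measurableSet_WT _))

lemma Atset_disjoint : Pairwise (Function.onFun Disjoint fun t => Atset (X := X) t) := by
  have key : ∀ {a b : ℕ}, a < b → Disjoint (Atset X a) (Atset X b) := by
    intro a b hab
    refine Set.disjoint_left.2 fun ω hωa hωb => ?_
    exact hωb.1.2 (a + 1) (by omega) hωa.2
  intro a b hab
  rcases hab.lt_or_gt with h | h
  · exact key h
  · exact (key h).symm

lemma tsum_At_le_one (hX : IsTreeWalk n P X init) [IsProbabilityMeasure P] :
    ∑' t, P (Atset X t) ≤ 1 := by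
  rw [← measure_iUnion Atset_disjoint (fun t => Atset_measurableSet hX t)]
  exact prob_le_one

lemma tsum_Bt_le (hX : IsTreeWalk n P X init) [IsProbabilityMeasure P] :
    ∑' t, P (Btset X t) ≤ 3 / 2 := by
  have h1 : (2 / 3 : ℝ≥0∞) * ∑' t, P (Btset X t) ≤ 1 := by
    rw [← ENNReal.tsum_mul_left]
    exact le_trans (ENNReal.tsum_le_tsum fun t => At_ge hX t) (tsum_At_le_one hX)
  rw [ENNReal.le_div_iff_mul_le (Or.inl (by norm_num)) (Or.inl (by norm_num))]
  calc (∑' t, P (Btset X t)) * 2 = 2 * ∑' t, P (Btset X t) := mul_comm _ _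
    _ = (3 * (2 / 3)) * ∑' t, P (Btset X t) := by
        rw [ENNReal.mul_div_cancel' (by norm_num) (by norm_num)]
    _ = 3 * ((2 / 3) * ∑' t, P (Btset X t)) := mul_assoc _ _ _
    _ ≤ 3 * 1 := mul_le_mul_right h1 _
    _ = 3 := mul_one _

/-- Counting: `𝓑` has `2^n` elements. -/
lemma card_Bf : (Finset.univ.filter (· ∈ treeBdry n)).card = 2 ^ n := by
  have himg : Finset.univ.filter (· ∈ treeBdry n)
      = Finset.image (fun l : List.Vector Bool n =>
          (some ⟨l.1, le_of_eq l.2⟩ : WiredTree n)) Finset.univ := by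
    ext v
    simp only [Finset.mem_filter, Finset.mem_univ, true_and, Finset.mem_image]
    constructor
    · rintro ⟨l, rfl, hl⟩
      exact ⟨⟨l.1, hl⟩, congrArg some (Subtype.ext rfl)⟩
    · rintro ⟨l, rfl⟩
      exact ⟨_, rfl, l.2⟩
  have hinj : Function.Injective
      (fun l : List.Vector Bool n => (some ⟨l.1, le_of_eq l.2⟩ : WiredTree n)) := by
    intro l m h
    have h2 : (some ⟨l.1, le_of_eq l.2⟩ : Option {l : List Bool // l.length ≤ n})
        = some ⟨m.1, le_of_eq m.2⟩ := h
    have h3 := Option.some.inj h2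
    have h4 := congrArg Subtype.val h3
    exact Subtype.ext h4
  rw [himg, Finset.card_image_of_injective _ hinj, Finset.card_univ, card_vector,
    Fintype.card_bool]

end Walk2
end TreeAux

attribute [-instance] Option.decidableEqNone Option.instDecidableEq

/-- For simple random walk on the wired binary tree started either at the root or at a
uniform tree vertex, and any `S` with `𝓑 ⊄ S`, the probability `p_S` of hitting
`𝓑 \ S` before the sink satisfies `p_S ≤ 2(1 − #(S ∩ 𝓑)/2^n)`. -/
theorem tree_hit_bdry_prob_bound (n : ℕ)
    {Ω : Type*} [MeasurableSpace Ω] (P : Measure Ω) [IsProbabilityMeasure P]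
    (X : ℕ → Ω → WiredTree n) (init : WiredTree n → ℝ≥0∞)
    (hX : IsTreeWalk n P X init)
    (hinit : (∀ v, init v = if v = some ⟨[], by simp⟩ then 1 else 0) ∨
      (∀ v, init v = if v = none then 0 else ((2 ^ (n + 1) - 1 : ℝ≥0∞))⁻¹))
    (S : Set (WiredTree n)) (hS : ¬ treeBdry n ⊆ S) :
    P {ω | ∃ t : ℕ, X t ω ∈ treeBdry n \ S ∧ ∀ s ≤ t, X s ω ≠ none}
      ≤ ENNReal.ofReal (2 * (1 - (Set.ncard (S ∩ treeBdry n) : ℝ) / 2 ^ n)) := by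
  classical
  open TreeAux in
  have hBn : ∀ x ∈ Finset.univ.filter (· ∈ treeBdry n \ S), x ∈ treeBdry n := by
    intro x hx
    exact (Finset.mem_filter.1 hx).2.1
  -- Step 1: union bound over time and position
  have hev : {ω | ∃ t : ℕ, X t ω ∈ treeBdry n \ S ∧ ∀ s ≤ t, X s ω ≠ none}
      = ⋃ t : ℕ, ⋃ x ∈ Finset.univ.filter (· ∈ treeBdry n \ S), TreeAux.bset X t x := by
    ext ω
    simp only [Set.mem_setOf_eq, Set.mem_iUnion, Finset.mem_filter, Finset.mem_univ,
      true_and, TreeAux.bset]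
    constructor
    · rintro ⟨t, h1, h2⟩; exact ⟨t, X t ω, h1, rfl, h2⟩
    · rintro ⟨t, x, hx, rfl, h2⟩; exact ⟨t, hx, h2⟩
  have hstep1 : P {ω | ∃ t : ℕ, X t ω ∈ treeBdry n \ S ∧ ∀ s ≤ t, X s ω ≠ none}
      ≤ ∑' t : ℕ, ∑ x ∈ Finset.univ.filter (· ∈ treeBdry n \ S), P (TreeAux.bset X t x) := by
    rw [hev]
    exact le_trans (measure_iUnion_le _)
      (ENNReal.tsum_le_tsum fun t => measure_biUnion_finset_le _ _)
  -- Step 2: symmetry swap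
  have hswap : ∀ t : ℕ, ((2 ^ n : ℕ) : ℝ≥0∞)
        * ∑ x ∈ Finset.univ.filter (· ∈ treeBdry n \ S), P (TreeAux.bset X t x)
      = ((Finset.univ.filter (· ∈ treeBdry n \ S)).card : ℝ≥0∞) * P (TreeAux.Btset X t) := by
    intro t
    calc ((2 ^ n : ℕ) : ℝ≥0∞)
        * ∑ x ∈ Finset.univ.filter (· ∈ treeBdry n \ S), P (TreeAux.bset X t x)
        = (((Finset.univ.filter (· ∈ treeBdry n) : Finset (WiredTree n))).card : ℝ≥0∞)
          * ∑ x ∈ Finset.univ.filter (· ∈ treeBdry n \ S), P (TreeAux.bset X t x) := by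
          rw [TreeAux.card_Bf]
      _ = ∑ _y ∈ (Finset.univ.filter (· ∈ treeBdry n) : Finset (WiredTree n)),
            ∑ x ∈ Finset.univ.filter (· ∈ treeBdry n \ S), P (TreeAux.bset X t x) := by
          rw [Finset.sum_const, nsmul_eq_mul]
      _ = ∑ y ∈ (Finset.univ.filter (· ∈ treeBdry n) : Finset (WiredTree n)),
            ∑ _x ∈ Finset.univ.filter (· ∈ treeBdry n \ S), P (TreeAux.bset X t y) := by
          refine Finset.sum_congr rfl fun y hy => Finset.sum_congr rfl fun x hx => ?_
          exact TreeAux.bset_symm hX (by convert hinit) (hBn x hx) ((Finset.mem_filter.1 hy).2) t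
      _ = ∑ y ∈ (Finset.univ.filter (· ∈ treeBdry n) : Finset (WiredTree n)),
            ((Finset.univ.filter (· ∈ treeBdry n \ S)).card : ℝ≥0∞) * P (TreeAux.bset X t y) := by
          refine Finset.sum_congr rfl fun y _ => ?_
          rw [Finset.sum_const, nsmul_eq_mul]
      _ = ((Finset.univ.filter (· ∈ treeBdry n \ S)).card : ℝ≥0∞)
            * ∑ y ∈ (Finset.univ.filter (· ∈ treeBdry n) : Finset (WiredTree n)),
              P (TreeAux.bset X t y) := by
          rw [Finset.mul_sum]
      _ = _ := by rw [← TreeAux.Btset_meas_eq hX t]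
  -- Step 3: combine with the geometric bound
  have hstep2 : ((2 ^ n : ℕ) : ℝ≥0∞)
      * P {ω | ∃ t : ℕ, X t ω ∈ treeBdry n \ S ∧ ∀ s ≤ t, X s ω ≠ none}
      ≤ ((Finset.univ.filter (· ∈ treeBdry n \ S)).card : ℝ≥0∞) * (3 / 2) := by
    calc ((2 ^ n : ℕ) : ℝ≥0∞)
        * P {ω | ∃ t : ℕ, X t ω ∈ treeBdry n \ S ∧ ∀ s ≤ t, X s ω ≠ none}
        ≤ ((2 ^ n : ℕ) : ℝ≥0∞) * ∑' t : ℕ,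
            ∑ x ∈ Finset.univ.filter (· ∈ treeBdry n \ S), P (TreeAux.bset X t x) :=
          mul_le_mul_right hstep1 _
      _ = ∑' t : ℕ, ((2 ^ n : ℕ) : ℝ≥0∞)
            * ∑ x ∈ Finset.univ.filter (· ∈ treeBdry n \ S), P (TreeAux.bset X t x) :=
          ENNReal.tsum_mul_left.symm
      _ = ∑' t : ℕ, ((Finset.univ.filter (· ∈ treeBdry n \ S)).card : ℝ≥0∞)
            * P (TreeAux.Btset X t) := tsum_congr fun t => hswap t
      _ = ((Finset.univ.filter (· ∈ treeBdry n \ S)).card : ℝ≥0∞)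
            * ∑' t : ℕ, P (TreeAux.Btset X t) := ENNReal.tsum_mul_left
      _ ≤ _ := mul_le_mul_right (TreeAux.tsum_Bt_le hX) _
  have h2npos : ((2 ^ n : ℕ) : ℝ≥0∞) ≠ 0 := by
    simp [pow_ne_zero]
  have h2ntop : ((2 ^ n : ℕ) : ℝ≥0∞) ≠ ⊤ := ENNReal.natCast_ne_top _
  have hdiv : P {ω | ∃ t : ℕ, X t ω ∈ treeBdry n \ S ∧ ∀ s ≤ t, X s ω ≠ none}
      ≤ ((Finset.univ.filter (· ∈ treeBdry n \ S)).card : ℝ≥0∞) * (3 / 2)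
        / ((2 ^ n : ℕ) : ℝ≥0∞) := by
    rw [ENNReal.le_div_iff_mul_le (Or.inl h2npos) (Or.inl h2ntop), mul_comm]
    exact hstep2
  -- Step 4: cardinality bookkeeping
  have hFB : (Finset.univ.filter (· ∈ treeBdry n \ S) : Finset (WiredTree n))
      = (Finset.univ.filter (· ∈ treeBdry n)).filter (fun x => x ∉ S) := by
    ext x
    simp only [Finset.mem_filter, Finset.mem_univ, true_and, Set.mem_diff]
    try tauto
  have hkF : ((Finset.univ.filter (· ∈ treeBdry n)).filter (· ∈ S)).card
      + (Finset.univ.filter (· ∈ treeBdry n \ S)).card = 2 ^ n := by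
    rw [hFB, ← TreeAux.card_Bf (n := n)]
    exact Finset.card_filter_add_card_filter_not _
  have hncard : (S ∩ treeBdry n).ncard
      = ((Finset.univ.filter (· ∈ treeBdry n)).filter (· ∈ S)).card := by
    rw [← Set.ncard_coe_finset]
    congr 1
    ext x
    simp only [Finset.coe_filter, Finset.mem_filter, Finset.mem_univ, true_and,
      Set.mem_setOf_eq, Set.mem_inter_iff]
    try tauto
  rw [hncard]
  have hreal : (1 : ℝ)
      - (((Finset.univ.filter (· ∈ treeBdry n)).filter (· ∈ S)).card : ℝ) / 2 ^ n
      = ((Finset.univ.filter (· ∈ treeBdry n \ S)).card : ℝ) / 2 ^ n := by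
    have hc : (((Finset.univ.filter (· ∈ treeBdry n)).filter (· ∈ S)).card : ℝ)
        + ((Finset.univ.filter (· ∈ treeBdry n \ S)).card : ℝ) = 2 ^ n := by
      exact_mod_cast hkF
    have hpos : (0 : ℝ) < 2 ^ n := by positivity
    rw [eq_div_iff hpos.ne', sub_mul, one_mul, div_mul_cancel₀ _ hpos.ne']
    linarith
  rw [hreal]
  have hofreal : ENNReal.ofReal
        (2 * (((Finset.univ.filter (· ∈ treeBdry n \ S)).card : ℝ) / 2 ^ n))
      = 2 * ((Finset.univ.filter (· ∈ treeBdry n \ S)).card : ℝ≥0∞) / ((2 ^ n : ℕ) : ℝ≥0∞) := by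
    rw [ENNReal.ofReal_mul (by norm_num : (0 : ℝ) ≤ 2),
      ENNReal.ofReal_div_of_pos (by positivity),
      ENNReal.ofReal_natCast, ENNReal.ofReal_ofNat,
      ENNReal.ofReal_pow (by norm_num : (0 : ℝ) ≤ 2), ENNReal.ofReal_ofNat,
      mul_div_assoc]
    congr 1
    norm_cast
  rw [hofreal]
  refine le_trans hdiv (ENNReal.div_le_div_right ?_ _)
  have h32 : (3 / 2 : ℝ≥0∞) ≤ 2 := ENNReal.div_le_of_le_mul (by norm_num)
  calc ((Finset.univ.filter (· ∈ treeBdry n \ S)).card : ℝ≥0∞) * (3 / 2)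
      ≤ ((Finset.univ.filter (· ∈ treeBdry n \ S)).card : ℝ≥0∞) * 2 := mul_le_mul_right h32 _
    _ = 2 * ((Finset.univ.filter (· ∈ treeBdry n \ S)).card : ℝ≥0∞) := mul_comm _ _
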